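/- Let (M,ρ) be a finite pseudometric space with ρ not identically zero, and let 𝒢 = (G,w) be a generalized filling of (M,ρ) whose type G is a tree in which every vertex of degree 1 is boundary. Then for every cyclic order π on M that is planar with respect to G, w(𝒢) ≥ (1/2) Σ_{k=0}^{n-1} ρ(π(k),π(k+1)); in particular w(𝒢) > 0, and hence the generalized minimal filling weight mf₋(M) is positive. -/

import Mathlib

open scoped BigOperators

namespace MinFill

variable {V : Type*}

/-- The total weight of a (generalized) weighted graph: the sum of the weights
of its edges. -/
noncomputable def graphWeight (G : SimpleGraph V) (w : Sym2 V → ℝ) : ℝ :=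
  ∑ᶠ e ∈ G.edgeSet, w e

/-- The weight of a walk: the sum of the weights of its edges. -/
def walkWeight {G : SimpleGraph V} (w : Sym2 V → ℝ) {u v : V} (p : G.Walk u v) : ℝ :=
  (p.edges.map w).sum

/-- `dw G w u v` is the minimum over simple paths in `G` from `u` to `v` of the
sum of the weights of their edges. -/
noncomputable def dw (G : SimpleGraph V) (w : Sym2 V → ℝ) (u v : V) : ℝ :=
  sInf {r : ℝ | ∃ p : G.Walk u v, p.IsPath ∧ walkWeight w p = r}

/-- The degree of a vertex: the number of edges incident to it. -/
noncomputable def deg (G : SimpleGraph V) (v : V) : ℕ :=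
  (G.neighborSet v).ncard

/-- `ρ` is a pseudometric on the subset `M`: symmetric, nonnegative, vanishing
on the diagonal and satisfying the triangle inequality. -/
def IsPseudometricOn (M : Set V) (ρ : V → V → ℝ) : Prop :=
  (∀ p ∈ M, ∀ q ∈ M, ρ p q = ρ q p) ∧
  (∀ p ∈ M, ∀ q ∈ M, 0 ≤ ρ p q) ∧
  (∀ p ∈ M, ρ p p = 0) ∧
  (∀ p ∈ M, ∀ q ∈ M, ∀ r ∈ M, ρ p r ≤ ρ p q + ρ q r)

/-- `(G, w)` is a generalized filling of `(M, ρ)` (with `M ⊆ V`): `G` is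
connected (and joins `M`), and for all boundary points `p, q ∈ M` every simple
path in `G` from `p` to `q` has weight at least `ρ p q` (equivalently
`ρ p q ≤ d_w(p, q)`). -/
def IsGenFilling (G : SimpleGraph V) (w : Sym2 V → ℝ) (M : Set V) (ρ : V → V → ℝ) : Prop :=
  G.Connected ∧ ∀ p ∈ M, ∀ q ∈ M, ∀ γ : G.Walk p q, γ.IsPath → ρ p q ≤ walkWeight w γ


/-- `ρ` is a pseudometric on the finite set `M`. -/
def IsPseudometric {M : Type*} (ρ : M → M → ℝ) : Prop :=
  (∀ p q, ρ p q = ρ q p) ∧ (∀ p q, 0 ≤ ρ p q) ∧ (∀ p, ρ p p = 0) ∧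
    (∀ p q r, ρ p r ≤ ρ p q + ρ q r)

/-- `(G, w)` is a generalized filling of `(M, ρ)`, where the boundary `M` is
embedded into the vertex set via `ι`. -/
def IsGenFillingE {M V : Type*} (G : SimpleGraph V) (ι : M ↪ V) (w : Sym2 V → ℝ)
    (ρ : M → M → ℝ) : Prop :=
  G.Connected ∧ ∀ p q : M, ∀ γ : G.Walk (ι p) (ι q), γ.IsPath → ρ p q ≤ walkWeight w γ

/-- The type `G` is a tree in which every vertex of degree 1 is boundary. -/
def GoodType {M V : Type*} (G : SimpleGraph V) (ι : M ↪ V) : Prop :=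
  G.IsTree ∧ ∀ v : V, deg G v = 1 → v ∈ Set.range ι

/-- The generalized minimal filling weight `mf₋(M)`: the infimum of total
weight over all generalized fillings of `(M, ρ)` whose type is a tree in which
every vertex of degree 1 is boundary. -/
noncomputable def mfNeg (M : Type) [Fintype M] (ρ : M → M → ℝ) : ℝ :=
  sInf {r : ℝ | ∃ (V : Type) (_ : Fintype V) (G : SimpleGraph V) (ι : M ↪ V)
    (w : Sym2 V → ℝ),
      IsGenFillingE G ι w ρ ∧ GoodType G ι ∧ r = graphWeight G w}

/-- The minimal filling weight `mf(M)`: the infimum of total weight over all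
fillings of `(M, ρ)` (with nonnegative weight functions). -/
noncomputable def mf (M : Type) [Fintype M] (ρ : M → M → ℝ) : ℝ :=
  sInf {r : ℝ | ∃ (V : Type) (_ : Fintype V) (G : SimpleGraph V) (ι : M ↪ V)
    (w : Sym2 V → ℝ),
      IsGenFillingE G ι w ρ ∧ (∀ e ∈ G.edgeSet, 0 ≤ w e) ∧ r = graphWeight G w}

open SimpleGraph

/-- canonical simple path between two vertices in a preconnected graph -/
noncomputable def pB {G : SimpleGraph V} (h : G.Preconnected) (a b : V) : G.Walk a b :=
  letI := Classical.decEq V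
  ((h a b).some.toPath : G.Path a b).1

lemma pB_isPath {G : SimpleGraph V} (h : G.Preconnected) (a b : V) :
    (pB h a b).IsPath := by
  letI := Classical.decEq V
  exact ((h a b).some.toPath).2

lemma path_eq_pB {G : SimpleGraph V} (hT : G.IsTree) {a b : V}
    (q : G.Walk a b) (hq : q.IsPath) : q = pB hT.isConnected.preconnected a b := by
  have := hT.IsAcyclic.path_unique ⟨q, hq⟩ ⟨_, pB_isPath hT.isConnected.preconnected a b⟩
  exact congrArg Subtype.val this

/-- edges of the canonical path, as a multiset -/
noncomputable def eb {G : SimpleGraph V} (h : G.Preconnected) (a b : V) :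
    Multiset (Sym2 V) := ((pB h a b).edges : Multiset (Sym2 V))

lemma eb_self {G : SimpleGraph V} (hT : G.IsTree) (a : V) :
    eb hT.isConnected.preconnected a a = 0 := by
  have : (Walk.nil : G.Walk a a) = pB hT.isConnected.preconnected a a :=
    path_eq_pB hT _ (Walk.IsPath.nil)
  simp [eb, ← this]

/-- sums over consecutive pairs of a list -/
def DD {γ : Type*} [AddCommMonoid γ] (f : V → V → γ) : List V → γ
  | [] => 0
  | [_] => 0
  | a :: b :: T => f a b + DD f (b :: T)

@[simp] lemma DD_nil {γ : Type*} [AddCommMonoid γ] (f : V → V → γ) : DD f [] = 0 := rfl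
@[simp] lemma DD_single {γ : Type*} [AddCommMonoid γ] (f : V → V → γ) (a : V) :
    DD f [a] = 0 := rfl
@[simp] lemma DD_cons {γ : Type*} [AddCommMonoid γ] (f : V → V → γ) (a b : V) (T : List V) :
    DD f (a :: b :: T) = f a b + DD f (b :: T) := rfl

lemma DD_split {γ : Type*} [AddCommMonoid γ] (f : V → V → γ) (A : List V) (x : V) (C : List V) :
    DD f (A ++ x :: C) = DD f (A ++ [x]) + DD f (x :: C) := by
  induction A with
  | nil => simp
  | cons a A ih =>
    cases A with
    | nil =>
      cases C with
      | nil => simp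
      | cons c C => simp [add_assoc]
    | cons a' A' =>
      have l1 : DD f ((a :: a' :: A') ++ x :: C) = f a a' + DD f ((a' :: A') ++ x :: C) := rfl
      have l2 : DD f ((a :: a' :: A') ++ [x]) = f a a' + DD f ((a' :: A') ++ [x]) := rfl
      rw [l1, l2, ih, add_assoc]

lemma DD_chain {σ : V → V → ℝ} (htri : ∀ a b c, σ a c ≤ σ a b + σ b c)
    (T : List V) : ∀ a b : V, σ a b ≤ DD σ (a :: (T ++ [b])) := by
  induction T with
  | nil => intro a b; simp
  | cons c T ih =>
    intro a b
    have : (a :: ((c :: T) ++ [b])) = a :: c :: (T ++ [b]) := rfl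
    rw [this, DD_cons]
    calc σ a b ≤ σ a c + σ c b := htri a c b
    _ ≤ σ a c + DD σ (c :: (T ++ [b])) := by gcongr; exact ih c b
    _ = _ := rfl

lemma DD_mono {σ τ : V → V → ℝ} {S : Set V} (h : ∀ a ∈ S, ∀ b ∈ S, σ a b ≤ τ a b) :
    ∀ L : List V, (∀ x ∈ L, x ∈ S) → DD σ L ≤ DD τ L := by
  intro L
  induction L with
  | nil => simp
  | cons a L ih =>
    intro hmem
    cases L with
    | nil => simp
    | cons b T =>
      rw [DD_cons, DD_cons]
      have hb : ∀ x ∈ b :: T, x ∈ S := fun x hx => hmem x (List.mem_cons_of_mem a hx)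
      exact add_le_add (h a (hmem a (by simp)) b (hb b (by simp))) (ih hb)

lemma DD_map_sum {G : SimpleGraph V} (h : G.Preconnected) (w : Sym2 V → ℝ) :
    ∀ L : List V, DD (fun a b => walkWeight w (pB h a b)) L
      = ((DD (eb h) L).map w).sum := by
  intro L
  induction L with
  | nil => simp
  | cons a L ih =>
    cases L with
    | nil => simp
    | cons b T =>
      rw [DD_cons, DD_cons, ih, Multiset.map_add, Multiset.sum_add]
      simp [walkWeight, eb]


section TreeLemmas

lemma exists_adj_of_connected {G : SimpleGraph V} [Fintype V] (hc : G.Connected)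
    (hcard : 2 ≤ Fintype.card V) (v : V) : ∃ x, G.Adj v x := by
  obtain ⟨y, hy⟩ := Fintype.exists_ne_of_one_lt_card (by omega) v
  obtain ⟨wlk⟩ := hc.preconnected v y
  cases wlk with
  | nil => exact absurd rfl hy.symm
  | cons h _ => exact ⟨_, h⟩

lemma deg_eq_degree {G : SimpleGraph V} [Fintype V] [DecidableRel G.Adj] (v : V) :
    deg G v = G.degree v := by
  rw [deg, SimpleGraph.degree, SimpleGraph.neighborFinset, Set.ncard_eq_toFinset_card']

lemma exists_leaf_ne {G : SimpleGraph V} [Fintype V] (hT : G.IsTree) (r : V)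
    (hcard : 3 ≤ Fintype.card V) : ∃ ℓ, ℓ ≠ r ∧ deg G ℓ = 1 := by
  classical
  by_contra hcon
  push_neg at hcon
  have hdeg1 : ∀ v : V, 1 ≤ G.degree v := by
    intro v
    obtain ⟨x, hx⟩ := exists_adj_of_connected hT.isConnected (by omega) v
    have : x ∈ G.neighborFinset v := by simpa using hx
    exact Finset.card_pos.mpr ⟨x, this⟩
  have hdeg2 : ∀ v : V, v ≠ r → 2 ≤ G.degree v := by
    intro v hv
    have h1 := hdeg1 v
    have h2 := hcon v hv
    rw [deg_eq_degree] at h2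
    omega
  have hsum := G.sum_degrees_eq_twice_card_edges
  have hE : G.edgeFinset.card + 1 = Fintype.card V := hT.card_edgeFinset
  have hsplit : ∑ v, G.degree v = G.degree r + ∑ v ∈ Finset.univ.erase r, G.degree v := by
    rw [← Finset.add_sum_erase _ _ (Finset.mem_univ r)]
  have hlow : (Finset.univ.erase r).card • 2 ≤ ∑ v ∈ Finset.univ.erase r, G.degree v :=
    Finset.card_nsmul_le_sum _ _ _ (fun v hv => hdeg2 v (Finset.ne_of_mem_erase hv))
  have hcarde : (Finset.univ.erase r).card = Fintype.card V - 1 := by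
    rw [Finset.card_erase_of_mem (Finset.mem_univ r), Finset.card_univ]
  rw [hcarde, smul_eq_mul] at hlow
  have h1 := hdeg1 r
  have := hsum
  rw [hsplit] at this
  omega

lemma leaf_unique_nbr {G : SimpleGraph V} {ℓ : V} (h : deg G ℓ = 1) :
    ∃ u, G.neighborSet ℓ = {u} := Set.ncard_eq_one.mp h

lemma leaf_not_mem_support {G : SimpleGraph V} [Finite V] (hT : G.IsTree) {ℓ x y : V}
    (hdeg : deg G ℓ = 1) (hx : x ≠ ℓ) (hy : y ≠ ℓ) {P : G.Walk x y} (hP : P.IsPath) :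
    ℓ ∉ P.support := by
  classical
  intro hmem
  set P₁ := P.takeUntil ℓ hmem with hP₁
  set P₂ := P.dropUntil ℓ hmem with hP₂
  have hPspec : P₁.append P₂ = P := P.take_spec hmem
  have hP₁path : P₁.IsPath := hP.takeUntil hmem
  have hP₂path : P₂.IsPath := hP.dropUntil hmem
  -- get neighbor a from P₁ (x → ℓ), via reverse
  obtain ⟨a, ha, R', hR'⟩ := SimpleGraph.Walk.exists_eq_cons_of_ne (Ne.symm hx) P₁.reverse
  have haP₁ : a ∈ P₁.support := by
    have : a ∈ P₁.reverse.support := by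
      rw [hR', SimpleGraph.Walk.support_cons]
      exact List.mem_cons_of_mem _ R'.start_mem_support
    rwa [SimpleGraph.Walk.support_reverse, List.mem_reverse] at this
  obtain ⟨b, hb, Q', hQ'⟩ := SimpleGraph.Walk.exists_eq_cons_of_ne (Ne.symm hy) P₂
  have hbP₂ : b ∈ P₂.support.tail := by
    rw [hQ', SimpleGraph.Walk.support_cons]
    exact Q'.start_mem_support
  have hab : a ≠ b := by
    intro hEq
    have hnodup : (P₁.support ++ P₂.support.tail).Nodup := by
      rw [← SimpleGraph.Walk.support_append, hPspec]
      exact hP.support_nodup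
    rw [List.nodup_append] at hnodup
    exact hnodup.2.2 a haP₁ a (hEq ▸ hbP₂) rfl
  have hsub : {a, b} ⊆ G.neighborSet ℓ := by
    intro z hz
    rcases hz with rfl | hz
    · exact ha
    · rcases hz with rfl; exact hb
  have h2 : 2 ≤ (G.neighborSet ℓ).ncard := by
    have := Set.ncard_le_ncard hsub (Set.toFinite _)
    rwa [Set.ncard_pair hab] at this
  rw [deg] at hdeg
  omega

end TreeLemmas


section Induced

variable [Finite V] {G : SimpleGraph V}

/-- finite edge set as a Finset (classical) -/
noncomputable def eFin (G : SimpleGraph V) [Finite V] : Finset (Sym2 V) :=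
  (Set.toFinite G.edgeSet).toFinset

lemma mem_eFin {e : Sym2 V} : e ∈ eFin G ↔ e ∈ G.edgeSet := Set.Finite.mem_toFinset _

lemma exists_lift_walk {s : Set V} :
    ∀ {x y : V} (p : G.Walk x y) (hx : x ∈ s) (hy : y ∈ s),
      (∀ z ∈ p.support, z ∈ s) →
      ∃ q : (G.induce s).Walk ⟨x, hx⟩ ⟨y, hy⟩,
        q.map (SimpleGraph.Embedding.induce s).toHom = p := by
  intro x y p
  induction p with
  | nil => intro hx hy _; exact ⟨.nil, by simp⟩
  | @cons x b y h p ih =>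
    intro hx hy hs
    have hb : b ∈ s := hs _ (by simp)
    obtain ⟨q, hq⟩ := ih hb hy (fun z hz => hs z (by simp [hz]))
    refine ⟨.cons (by exact h) q, ?_⟩
    exact congrArg (SimpleGraph.Walk.cons h) hq

section Leaf

variable {ℓ u : V} (hT : G.IsTree) (hℓ : deg G ℓ = 1) (hu : G.neighborSet ℓ = {u})

lemma adj_lu (hu : G.neighborSet ℓ = {u}) : G.Adj ℓ u := by
  have : u ∈ G.neighborSet ℓ := by rw [hu]; rfl
  exact this

include hT hℓ hu

lemma induced_connected : (G.induce {v : V | v ≠ ℓ}).Connected := by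
  haveI hne : Nonempty ↥{v : V | v ≠ ℓ} := ⟨⟨u, (adj_lu hu).ne'⟩⟩
  apply SimpleGraph.Connected.mk
  intro a b
  have ha : (a : V) ≠ ℓ := a.2
  have hb : (b : V) ≠ ℓ := b.2
  have hP := pB_isPath hT.isConnected.preconnected (a : V) (b : V)
  have havoid := leaf_not_mem_support hT hℓ ha hb hP
  obtain ⟨q, _⟩ := exists_lift_walk (pB hT.isConnected.preconnected (a : V) (b : V)) a.2 b.2
    (fun z hz => by intro hzl; exact havoid (hzl ▸ hz))
  exact ⟨q⟩

lemma induced_isTree : (G.induce {v : V | v ≠ ℓ}).IsTree := by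
  constructor
  · exact induced_connected hT hℓ hu
  · apply SimpleGraph.isAcyclic_of_path_unique
    intro a b p q
    have hinj : Function.Injective
        ⇑(SimpleGraph.Embedding.induce (G := G) {v : V | v ≠ ℓ}).toHom := Subtype.val_injective
    have h1 := SimpleGraph.Walk.map_isPath_of_injective (p := p.1) hinj p.2
    have h2 := SimpleGraph.Walk.map_isPath_of_injective (p := q.1) hinj q.2
    have := hT.IsAcyclic.path_unique ⟨_, h1⟩ ⟨_, h2⟩
    rw [Subtype.mk.injEq] at this
    have := SimpleGraph.Walk.map_injective_of_injective hinj a b this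
    exact Subtype.ext this

lemma induced_leaf (v : ↥{v : V | v ≠ ℓ}) (hv : deg (G.induce {v : V | v ≠ ℓ}) v = 1) :
    (v : V) = u ∨ deg G (v : V) = 1 := by
  by_cases hadj : G.Adj (v : V) ℓ
  · left
    have : (v : V) ∈ G.neighborSet ℓ := hadj.symm
    rw [hu] at this
    exact this
  · right
    have himg : Subtype.val '' ((G.induce {v : V | v ≠ ℓ}).neighborSet v)
        = G.neighborSet (v : V) := by
      ext z
      constructor
      · rintro ⟨⟨z', hz'⟩, hadj', rfl⟩
        exact hadj'
      · intro hz
        have hzl : z ≠ ℓ := by rintro rfl; exact hadj hz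
        exact ⟨⟨z, hzl⟩, by exact hz, rfl⟩
    rw [deg, ← himg, Set.ncard_image_of_injective _ Subtype.val_injective]
    exact hv

lemma edge_decomp :
    (eFin G).val = ((eFin (G.induce {v : V | v ≠ ℓ})).val.map
      (Sym2.map (Subtype.val : ↥{v : V | v ≠ ℓ} → V))) + {s(u, ℓ)} := by
  classical
  have hul : u ≠ ℓ := (adj_lu hu).ne'
  have hnotmem : s(u, ℓ) ∉ (eFin (G.induce {v : V | v ≠ ℓ})).image
      (Sym2.map (Subtype.val : ↥{v : V | v ≠ ℓ} → V)) := by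
    intro hmem
    rw [Finset.mem_image] at hmem
    obtain ⟨e, _, he⟩ := hmem
    induction e with
    | _ a b =>
      rw [Sym2.map_pair_eq] at he
      have : ℓ ∈ ({(a : V), (b : V)} : Set V) := by
        have : ℓ ∈ s(u, ℓ) := Sym2.mem_mk_right u ℓ
        rw [← he] at this
        simpa using this
      rcases this with h | h
      · exact a.2 h.symm
      · exact b.2 h.symm
  have hfs : eFin G = insert s(u, ℓ) ((eFin (G.induce {v : V | v ≠ ℓ})).image
      (Sym2.map (Subtype.val : ↥{v : V | v ≠ ℓ} → V))) := by
    ext e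
    rw [mem_eFin, Finset.mem_insert, Finset.mem_image]
    constructor
    · intro he
      induction e with
      | _ a b =>
        rw [SimpleGraph.mem_edgeSet] at he
        by_cases hal : a = ℓ
        · left
          subst hal
          have : b ∈ G.neighborSet a := he
          rw [hu] at this
          rw [this]
          exact Sym2.eq_swap
        · by_cases hbl : b = ℓ
          · left
            subst hbl
            have : a ∈ G.neighborSet b := he.symm
            rw [hu] at this
            rw [this]
          · right
            refine ⟨s(⟨a, hal⟩, ⟨b, hbl⟩), ?_, by rw [Sym2.map_pair_eq]⟩
            rw [mem_eFin, SimpleGraph.mem_edgeSet]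
            exact he
    · rintro (rfl | ⟨e', he', rfl⟩)
      · exact (adj_lu hu).symm
      · induction e' with
        | _ a b =>
          rw [mem_eFin, SimpleGraph.mem_edgeSet] at he'
          rw [Sym2.map_pair_eq, SimpleGraph.mem_edgeSet]
          exact he'
  rw [hfs, Finset.insert_val_of_notMem hnotmem,
    Finset.image_val_of_injOn ((Sym2.map.injective Subtype.val_injective).injOn),
    add_comm, Multiset.singleton_add]

lemma eb_lift (a b : ↥{v : V | v ≠ ℓ}) :
    eb hT.isConnected.preconnected (a : V) (b : V)
      = (eb (induced_isTree hT hℓ hu).isConnected.preconnected a b).map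
          (Sym2.map Subtype.val) := by
  set hpc' := (induced_isTree hT hℓ hu).isConnected.preconnected
  have hq : ((pB hpc' a b).map
      (SimpleGraph.Embedding.induce (G := G) {v : V | v ≠ ℓ}).toHom).IsPath :=
    SimpleGraph.Walk.map_isPath_of_injective Subtype.val_injective (pB_isPath hpc' a b)
  have h3 : pB hT.isConnected.preconnected (a : V) (b : V)
      = (pB hpc' a b).map (SimpleGraph.Embedding.induce (G := G) {v : V | v ≠ ℓ}).toHom :=
    (path_eq_pB hT _ hq).symm
  rw [eb, eb, h3]
  erw [SimpleGraph.Walk.edges_map]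
  rfl

lemma eb_to_leaf {x : V} (hx : x ≠ ℓ) :
    eb hT.isConnected.preconnected x ℓ = eb hT.isConnected.preconnected x u + {s(u, ℓ)} := by
  have hul : u ≠ ℓ := (adj_lu hu).ne'
  have hP := pB_isPath hT.isConnected.preconnected x u
  have havoid := leaf_not_mem_support hT hℓ hx hul hP
  set Q := (pB hT.isConnected.preconnected x u).concat ((adj_lu hu).symm) with hQ
  have hQpath : Q.IsPath := by
    rw [SimpleGraph.Walk.isPath_def, hQ, SimpleGraph.Walk.support_concat]
    rw [List.nodup_append]
    refine ⟨hP.support_nodup, List.nodup_singleton _, ?_⟩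
    intro z hz w hz' hzw
    rw [List.mem_singleton] at hz'
    subst hz' hzw
    exact havoid hz
  have := path_eq_pB hT Q hQpath
  have h3 : pB hT.isConnected.preconnected x ℓ = Q := this.symm
  rw [eb, h3, hQ, SimpleGraph.Walk.edges_concat, List.concat_eq_append, eb,
    ← Multiset.coe_singleton, ← Multiset.coe_add]
lemma eb_from_leaf {x : V} (hx : x ≠ ℓ) :
    eb hT.isConnected.preconnected ℓ x = {s(u, ℓ)} + eb hT.isConnected.preconnected u x := by
  have hul : u ≠ ℓ := (adj_lu hu).ne'
  have hP := pB_isPath hT.isConnected.preconnected u x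
  have havoid := leaf_not_mem_support hT hℓ hul hx hP
  set R := SimpleGraph.Walk.cons (adj_lu hu) (pB hT.isConnected.preconnected u x) with hR
  have hRpath : R.IsPath := by
    rw [hR, SimpleGraph.Walk.cons_isPath_iff]
    exact ⟨hP, havoid⟩
  have h3 : pB hT.isConnected.preconnected ℓ x = R := (path_eq_pB hT R hRpath).symm
  rw [eb, h3, hR, SimpleGraph.Walk.edges_cons, Sym2.eq_swap]
  rfl

lemma DD_lift : ∀ L : List ↥{v : V | v ≠ ℓ},
    DD (eb hT.isConnected.preconnected) (L.map Subtype.val)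
      = (DD (eb (induced_isTree hT hℓ hu).isConnected.preconnected) L).map
          (Sym2.map Subtype.val) := by
  intro L
  induction L with
  | nil => simp
  | cons a L ih =>
    cases L with
    | nil => simp
    | cons b T =>
      rw [List.map_cons, List.map_cons, DD_cons, DD_cons, Multiset.map_add, ← ih,
        eb_lift hT hℓ hu a b, List.map_cons]

end Leaf

end Induced


section Tour

lemma head?_append_cons {α : Type*} (A : List α) (u : α) (X Y : List α) :
    (A ++ u :: X).head? = (A ++ u :: Y).head? := by cases A <;> simp

theorem tour_exists : ∀ (n : ℕ) (V : Type) (_ : Fintype V) (G : SimpleGraph V)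
    (hT : G.IsTree) (B : Finset V), (∀ v, deg G v = 1 → v ∈ B) → ∀ (r : V), r ∈ B →
    2 ≤ Fintype.card V → Fintype.card V = n →
    ∃ J : List V, J ≠ [] ∧ J.head? = some r ∧ J.Nodup ∧ (∀ x, x ∈ J ↔ x ∈ B) ∧
      DD (eb hT.isConnected.preconnected) (J ++ [r]) = 2 • (eFin G).val := by
  intro n
  induction n using Nat.strong_induction_on with
  | _ n IH =>
  intro V instV G hT B hB r hr hcard hn
  classical
  by_cases hc3 : 3 ≤ Fintype.card V
  · -- inductive step
    obtain ⟨ℓ, hℓr, hℓdeg⟩ := exists_leaf_ne hT r hc3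
    obtain ⟨u, hu⟩ := leaf_unique_nbr hℓdeg
    have hadj : G.Adj ℓ u := adj_lu hu
    have hul : u ≠ ℓ := hadj.ne'
    have hℓB : ℓ ∈ B := hB ℓ hℓdeg
    haveI instS : Fintype ↥{v : V | v ≠ ℓ} := Fintype.ofFinite _
    have hcards : Fintype.card ↥{v : V | v ≠ ℓ} = n - 1 := by
      have h1 := Fintype.card_subtype_compl (fun v : V => v = ℓ)
      rw [Fintype.card_subtype_eq] at h1
      have h2 : Fintype.card ↥{v : V | v ≠ ℓ} = Fintype.card {v : V // ¬ v = ℓ} :=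
        Fintype.card_congr (Equiv.subtypeEquivRight (by intro x; exact Iff.rfl))
      rw [h2, h1, hn]
    have hT' := induced_isTree hT hℓdeg hu
    set B' : Finset ↥{v : V | v ≠ ℓ} :=
      Finset.univ.filter (fun x => (x : V) ∈ insert u (B.erase ℓ)) with hB'def
    have hB' : ∀ v, deg (G.induce {v : V | v ≠ ℓ}) v = 1 → v ∈ B' := by
      intro v hv
      rw [hB'def, Finset.mem_filter]
      refine ⟨Finset.mem_univ _, ?_⟩
      rcases induced_leaf hT hℓdeg hu v hv with h | h
      · rw [h]; exact Finset.mem_insert_self _ _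
      · exact Finset.mem_insert_of_mem (Finset.mem_erase.mpr ⟨v.2, hB _ h⟩)
    have hrℓ : r ≠ ℓ := Ne.symm hℓr
    have hr' : (⟨r, hrℓ⟩ : ↥{v : V | v ≠ ℓ}) ∈ B' := by
      rw [hB'def, Finset.mem_filter]
      exact ⟨Finset.mem_univ _, Finset.mem_insert_of_mem (Finset.mem_erase.mpr ⟨hrℓ, hr⟩)⟩
    obtain ⟨J', hJ'ne, hJ'head, hJ'nodup, hJ'mem, hJ'sum⟩ :=
      IH (n - 1) (by omega) ↥{v : V | v ≠ ℓ} instS (G.induce {v : V | v ≠ ℓ}) hT' B' hB'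
        ⟨r, hrℓ⟩ hr' (by omega) hcards
    set K : List V := J'.map Subtype.val with hKdef
    have hKhead : K.head? = some r := by rw [hKdef, List.head?_map, hJ'head]; rfl
    have hKnodup : K.Nodup := hJ'nodup.map Subtype.val_injective
    have hKmem : ∀ x, x ∈ K ↔ x ∈ insert u (B.erase ℓ) := by
      intro x
      rw [hKdef, List.mem_map]
      constructor
      · rintro ⟨x', hx', rfl⟩
        have := (hJ'mem x').mp hx'
        rw [hB'def, Finset.mem_filter] at this
        exact this.2
      · intro hx
        have hxℓ : x ≠ ℓ := by
          rcases Finset.mem_insert.mp hx with rfl | h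
          · exact hul
          · exact (Finset.mem_erase.mp h).1
        refine ⟨⟨x, hxℓ⟩, ?_, rfl⟩
        rw [hJ'mem, hB'def, Finset.mem_filter]
        exact ⟨Finset.mem_univ _, hx⟩
    have hℓK : ℓ ∉ K := by
      intro h
      rcases Finset.mem_insert.mp ((hKmem ℓ).mp h) with h' | h'
      · exact hul h'.symm
      · exact (Finset.mem_erase.mp h').1 rfl
    have hKsum : DD (eb hT.isConnected.preconnected) (K ++ [r])
        = 2 • ((eFin (G.induce {v : V | v ≠ ℓ})).val.map (Sym2.map Subtype.val)) := by
      have hKr : K ++ [r] = (J' ++ [(⟨r, hrℓ⟩ : ↥{v : V | v ≠ ℓ})]).map Subtype.val := by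
        rw [List.map_append, hKdef]; rfl
      rw [hKr, DD_lift hT hℓdeg hu, hJ'sum, Multiset.map_nsmul]
    have huK : u ∈ K := (hKmem u).mpr (Finset.mem_insert_self _ _)
    obtain ⟨A, C, hK⟩ := List.append_of_mem huK
    have hKnodup' : (u :: (A ++ C)).Nodup := by
      rw [← List.nodup_middle, ← hK]; exact hKnodup
    have huAC : u ∉ A ++ C := (List.nodup_cons.mp hKnodup').1
    obtain ⟨c, C₂, hCC⟩ : ∃ c C₂, C ++ [r] = c :: C₂ := by
      cases C with
      | nil => exact ⟨r, [], rfl⟩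
      | cons c C' => exact ⟨c, C' ++ [r], rfl⟩
    have hcℓ : c ≠ ℓ := by
      have : c ∈ C ++ [r] := by rw [hCC]; simp
      rcases List.mem_append.mp this with h | h
      · intro h'
        exact hℓK (by rw [hK]; subst h'; exact List.mem_append_right _ (List.mem_cons_of_mem _ h))
      · rw [List.mem_singleton] at h; subst h; exact hrℓ
    have hKr2 : K ++ [r] = A ++ u :: c :: C₂ := by
      rw [hK, List.append_assoc]
      simp [hCC]
    set f := eb hT.isConnected.preconnected with hf
    have hsplitK : DD f (K ++ [r]) = DD f (A ++ [u]) + (f u c + DD f (c :: C₂)) := by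
      rw [hKr2, DD_split, DD_cons]
    have hful : f u ℓ = {s(u, ℓ)} := by
      rw [hf, eb_to_leaf hT hℓdeg hu hul, eb_self hT]
      simp
    have hfℓc : f ℓ c = {s(u, ℓ)} + f u c := eb_from_leaf hT hℓdeg hu hcℓ
    have hTotal : (eFin G).val
        = ((eFin (G.induce {v : V | v ≠ ℓ})).val.map (Sym2.map Subtype.val)) + {s(u, ℓ)} :=
      edge_decomp hT hℓdeg hu
    by_cases hcase : u ∈ B
    · -- insert ℓ after u
      refine ⟨A ++ u :: ℓ :: C, by simp, ?_, ?_, ?_, ?_⟩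
      · rw [head?_append_cons A u (ℓ :: C) C, ← hK, hKhead]
      · have h1 : A ++ u :: ℓ :: C = (A ++ [u]) ++ ℓ :: C := by simp
        rw [h1, List.nodup_middle]
        refine List.nodup_cons.mpr ⟨?_, ?_⟩
        · intro h
          apply hℓK
          rw [hK]
          rcases List.mem_append.mp h with h' | h'
          · rcases List.mem_append.mp h' with h'' | h''
            · exact List.mem_append_left _ h''
            · rw [List.mem_singleton] at h''; exact absurd h''.symm hul
          · exact List.mem_append_right _ (List.mem_cons_of_mem _ h')
        · have : (A ++ [u]) ++ C = A ++ u :: C := by simp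
          rw [this, ← hK]; exact hKnodup
      · intro x
        have hx1 : x ∈ A ++ u :: ℓ :: C ↔ x ∈ K ∨ x = ℓ := by
          rw [hK]
          simp only [List.mem_append, List.mem_cons]
          tauto
        rw [hx1]
        constructor
        · rintro (h | rfl)
          · rcases Finset.mem_insert.mp ((hKmem x).mp h) with rfl | h'
            · exact hcase
            · exact (Finset.mem_erase.mp h').2
          · exact hℓB
        · intro hx
          by_cases hxℓ : x = ℓ
          · right; exact hxℓ
          · left
            exact (hKmem x).mpr (Finset.mem_insert_of_mem (Finset.mem_erase.mpr ⟨hxℓ, hx⟩))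
      · have h2 : (A ++ u :: ℓ :: C) ++ [r] = A ++ u :: ℓ :: c :: C₂ := by
          rw [List.append_assoc]
          simp [hCC]
        rw [h2, DD_split, DD_cons, DD_cons, hful, hfℓc, hTotal]
        rw [hsplitK] at hKsum
        rw [smul_add, ← hKsum, two_nsmul]
        abel
    · -- replace u by ℓ
      have hur : u ≠ r := by rintro rfl; exact hcase hr
      have hAne : A ≠ [] := by
        rintro rfl
        rw [hK] at hKhead
        simp at hKhead
        exact hur hKhead
      obtain ⟨A₁, a₁, hA⟩ : ∃ A₁ a₁, A = A₁ ++ [a₁] := by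
        rcases List.eq_nil_or_concat A with h | ⟨L, b, h⟩
        · exact absurd h hAne
        · exact ⟨L, b, by rw [h, List.concat_eq_append]⟩
      have ha₁K : a₁ ∈ K := by rw [hK, hA]; simp
      have ha₁ℓ : a₁ ≠ ℓ := by rintro rfl; exact hℓK ha₁K
      refine ⟨A ++ ℓ :: C, by simp, ?_, ?_, ?_, ?_⟩
      · have e1 : A ++ ℓ :: C = A₁ ++ a₁ :: ℓ :: C := by rw [hA]; simp
        have e2 : K = A₁ ++ a₁ :: u :: C := by rw [hK, hA]; simp
        rw [e1, head?_append_cons A₁ a₁ (ℓ :: C) (u :: C), ← e2, hKhead]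
      · rw [List.nodup_middle]
        refine List.nodup_cons.mpr ⟨?_, (List.nodup_cons.mp hKnodup').2⟩
        intro h
        apply hℓK
        rw [hK]
        rcases List.mem_append.mp h with h' | h'
        · exact List.mem_append_left _ h'
        · exact List.mem_append_right _ (List.mem_cons_of_mem _ h')
      · intro x
        have hx1 : x ∈ A ++ ℓ :: C ↔ (x ∈ A ++ C) ∨ x = ℓ := by
          simp only [List.mem_append, List.mem_cons]
          tauto
        rw [hx1]
        constructor
        · rintro (h | rfl)
          · have hxK : x ∈ K := by
              rw [hK]
              rcases List.mem_append.mp h with h' | h'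
              · exact List.mem_append_left _ h'
              · exact List.mem_append_right _ (List.mem_cons_of_mem _ h')
            rcases Finset.mem_insert.mp ((hKmem x).mp hxK) with rfl | h'
            · exact absurd h huAC
            · exact (Finset.mem_erase.mp h').2
          · exact hℓB
        · intro hx
          by_cases hxℓ : x = ℓ
          · right; exact hxℓ
          · left
            have hxK : x ∈ K :=
              (hKmem x).mpr (Finset.mem_insert_of_mem (Finset.mem_erase.mpr ⟨hxℓ, hx⟩))
            have hxu : x ≠ u := by rintro rfl; exact hcase hx
            rw [hK] at hxK
            rcases List.mem_append.mp hxK with h' | h'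
            · exact List.mem_append_left _ h'
            · rcases List.mem_cons.mp h' with h'' | h''
              · exact absurd h'' hxu
              · exact List.mem_append_right _ h''
      · have h2 : (A ++ ℓ :: C) ++ [r] = A₁ ++ a₁ :: ℓ :: c :: C₂ := by
          rw [List.append_assoc, hA]
          simp [hCC]
        have h3 : K ++ [r] = A₁ ++ a₁ :: u :: c :: C₂ := by
          rw [hKr2, hA]; simp
        have hfa₁ : f a₁ ℓ = f a₁ u + {s(u, ℓ)} := eb_to_leaf hT hℓdeg hu ha₁ℓ
        rw [h2, DD_split, DD_cons, DD_cons, hfa₁, hfℓc, hTotal]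
        rw [h3, DD_split, DD_cons, DD_cons] at hKsum
        rw [smul_add, ← hKsum, two_nsmul]
        abel
  · -- base case: exactly two vertices
    have hc2 : Fintype.card V = 2 := by omega
    obtain ⟨ℓ, hℓr⟩ := Fintype.exists_ne_of_one_lt_card (by omega) r
    have hrℓ : r ≠ ℓ := Ne.symm hℓr
    have huniq : ∀ a : V, a ≠ r → a = ℓ := by
      intro a ha
      by_contra hne
      have hcard3 : ({a, ℓ, r} : Finset V).card = 3 := by
        rw [Finset.card_insert_of_notMem (by simp [hne, ha]),
          Finset.card_insert_of_notMem (by simp [hℓr]), Finset.card_singleton]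
      have h3 : 3 ≤ Fintype.card V := by
        calc 3 = ({a, ℓ, r} : Finset V).card := hcard3.symm
        _ ≤ Fintype.card V := Finset.card_le_univ _
      omega
    have hadj : G.Adj r ℓ := by
      obtain ⟨x, hx⟩ := exists_adj_of_connected hT.isConnected (by omega) r
      have := huniq x hx.ne'
      rwa [this] at hx
    have hdegℓ : deg G ℓ = 1 := by
      have hns : G.neighborSet ℓ = {r} := by
        ext z
        simp only [SimpleGraph.mem_neighborSet, Set.mem_singleton_iff]
        constructor
        · intro hz
          by_contra hzr
          exact hz.ne' (huniq z hzr)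
        · rintro rfl; exact hadj.symm
      rw [deg, hns, Set.ncard_singleton]
    have hℓB : ℓ ∈ B := hB ℓ hdegℓ
    refine ⟨[r, ℓ], by simp, rfl, by simp [hrℓ], ?_, ?_⟩
    · intro x
      simp only [List.mem_cons, List.mem_singleton, List.not_mem_nil, or_false]
      constructor
      · rintro (rfl | rfl)
        · exact hr
        · exact hℓB
      · intro _
        by_cases hxr : x = r
        · left; exact hxr
        · right; exact huniq x hxr
    · have hpath : (SimpleGraph.Walk.cons hadj SimpleGraph.Walk.nil : G.Walk r ℓ).IsPath := by
        rw [SimpleGraph.Walk.cons_isPath_iff]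
        exact ⟨SimpleGraph.Walk.IsPath.nil, by simp [hrℓ]⟩
      have hpath' : (SimpleGraph.Walk.cons hadj.symm SimpleGraph.Walk.nil : G.Walk ℓ r).IsPath := by
        rw [SimpleGraph.Walk.cons_isPath_iff]
        exact ⟨SimpleGraph.Walk.IsPath.nil, by simp [hℓr]⟩
      have hfrℓ : eb hT.isConnected.preconnected r ℓ = {s(r, ℓ)} := by
        have h1 : pB hT.isConnected.preconnected r ℓ
            = SimpleGraph.Walk.cons hadj SimpleGraph.Walk.nil := (path_eq_pB hT _ hpath).symm
        rw [eb, h1, SimpleGraph.Walk.edges_cons, SimpleGraph.Walk.edges_nil]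
        rfl
      have hfℓr : eb hT.isConnected.preconnected ℓ r = {s(r, ℓ)} := by
        have h1 : pB hT.isConnected.preconnected ℓ r
            = SimpleGraph.Walk.cons hadj.symm SimpleGraph.Walk.nil := (path_eq_pB hT _ hpath').symm
        rw [eb, h1, SimpleGraph.Walk.edges_cons, SimpleGraph.Walk.edges_nil, Sym2.eq_swap]
        rfl
      have hefin : eFin G = {s(r, ℓ)} := by
        ext e
        rw [mem_eFin, Finset.mem_singleton]
        constructor
        · intro he
          induction e with
          | _ a b =>
            rw [SimpleGraph.mem_edgeSet] at he
            by_cases har : a = r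
            · subst har
              rw [huniq b he.ne']
            · rw [huniq a har] at he ⊢
              have hbr : b = r := by
                by_contra hbr
                exact he.ne' (huniq b hbr)
              rw [hbr, Sym2.eq_swap]
        · rintro rfl
          exact hadj
      show DD (eb hT.isConnected.preconnected) [r, ℓ, r] = 2 • (eFin G).val
      rw [DD_cons, DD_cons, DD_single, hfrℓ, hfℓr, hefin, Finset.singleton_val, two_nsmul,
        add_zero]
end Tour


section Key

lemma graphWeight_eq [Fintype V] (G : SimpleGraph V) (w : Sym2 V → ℝ) :
    graphWeight G w = ((eFin G).val.map w).sum := by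
  rw [graphWeight]
  have h : G.edgeSet = ↑(eFin G) := (Set.Finite.coe_toFinset _).symm
  rw [h, finsum_mem_coe_finset]
  rfl

lemma key_ineq {M : Type} [Fintype M] {ρ : M → M → ℝ} (hρ : IsPseudometric ρ)
    {V : Type} [Fintype V] (G : SimpleGraph V) (ι : M ↪ V) (w : Sym2 V → ℝ)
    (hfill : IsGenFillingE G ι w ρ) (htype : GoodType G ι) {p q : M} (hpq : p ≠ q) :
    ρ p q ≤ graphWeight G w := by
  classical
  have hιpq : ι p ≠ ι q := fun h => hpq (ι.injective h)
  haveI : Nontrivial V := ⟨⟨ι p, ι q, hιpq⟩⟩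
  have hcard : 2 ≤ Fintype.card V := Fintype.one_lt_card
  set B : Finset V := Finset.univ.image ι with hBdef
  have hB : ∀ v, deg G v = 1 → v ∈ B := by
    intro v hv
    obtain ⟨m, hm⟩ := htype.2 v hv
    rw [hBdef]
    exact Finset.mem_image.mpr ⟨m, Finset.mem_univ _, hm⟩
  have hrB : ι p ∈ B := Finset.mem_image.mpr ⟨p, Finset.mem_univ _, rfl⟩
  obtain ⟨J, hJne, hJhead, hJnodup, hJmem, hJsum⟩ :=
    tour_exists (Fintype.card V) V ‹_› G htype.1 B hB (ι p) hrB hcard rfl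
  haveI : Nonempty M := ⟨p⟩
  set σ : V → V → ℝ := fun a b => ρ (Function.invFun ι a) (Function.invFun ι b) with hσ
  have htri : ∀ a b c, σ a c ≤ σ a b + σ b c := fun a b c => hρ.2.2.2 _ _ _
  have hinv : ∀ m : M, Function.invFun ι (ι m) = m :=
    Function.leftInverse_invFun ι.injective
  obtain ⟨T, hT0⟩ : ∃ T, J = ι p :: T := by
    cases J with
    | nil => exact absurd rfl hJne
    | cons a T =>
      rw [List.head?_cons, Option.some.injEq] at hJhead
      exact ⟨T, by rw [hJhead]⟩
  have hqJ : ι q ∈ T := by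
    have h1 : ι q ∈ J := (hJmem _).mpr (Finset.mem_image.mpr ⟨q, Finset.mem_univ _, rfl⟩)
    rw [hT0, List.mem_cons] at h1
    rcases h1 with h | h
    · exact absurd h.symm hιpq
    · exact h
  obtain ⟨T₁, T₂, hT12⟩ := List.append_of_mem hqJ
  -- lower bound
  have hL : J ++ [ι p] = (ι p :: T₁) ++ ι q :: (T₂ ++ [ι p]) := by
    rw [hT0, hT12]; simp
  have hlow : ρ p q + ρ q p ≤ DD σ (J ++ [ι p]) := by
    rw [hL, DD_split]
    have c1 : σ (ι p) (ι q) ≤ DD σ ((ι p :: T₁) ++ [ι q]) := DD_chain htri T₁ (ι p) (ι q)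
    have c2 : σ (ι q) (ι p) ≤ DD σ (ι q :: (T₂ ++ [ι p])) := DD_chain htri T₂ (ι q) (ι p)
    have e1 : σ (ι p) (ι q) = ρ p q := by rw [hσ]; simp only []; rw [hinv, hinv]
    have e2 : σ (ι q) (ι p) = ρ q p := by rw [hσ]; simp only []; rw [hinv, hinv]
    rw [e1] at c1; rw [e2] at c2
    exact add_le_add c1 c2
  -- upper bound
  set τ : V → V → ℝ :=
    fun a b => walkWeight w (pB htype.1.isConnected.preconnected a b) with hτ
  have hστ : ∀ a ∈ Set.range ι, ∀ b ∈ Set.range ι, σ a b ≤ τ a b := by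
    intro a ha b hb
    have ha' : ι (Function.invFun ι a) = a := Function.invFun_eq ha
    have hb' : ι (Function.invFun ι b) = b := Function.invFun_eq hb
    have hγ := (pB htype.1.isConnected.preconnected a b).copy ha'.symm hb'.symm
    have hγpath : ((pB htype.1.isConnected.preconnected a b).copy ha'.symm hb'.symm).IsPath := by
      rw [SimpleGraph.Walk.isPath_copy]
      exact pB_isPath _ _ _
    have h2 := hfill.2 _ _ _ hγpath
    rw [hσ, hτ]
    simp only []
    calc ρ (Function.invFun ι a) (Function.invFun ι b)
        ≤ walkWeight w ((pB htype.1.isConnected.preconnected a b).copy ha'.symm hb'.symm) := h2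
    _ = walkWeight w (pB htype.1.isConnected.preconnected a b) := by
        rw [walkWeight, walkWeight, SimpleGraph.Walk.edges_copy]
  have hmemrange : ∀ x ∈ J ++ [ι p], x ∈ Set.range ι := by
    intro x hx
    rcases List.mem_append.mp hx with h | h
    · have := (hJmem x).mp h
      rw [hBdef, Finset.mem_image] at this
      obtain ⟨m, _, hm⟩ := this
      exact ⟨m, hm⟩
    · rw [List.mem_singleton] at h
      exact ⟨p, h.symm⟩
  have hup : DD σ (J ++ [ι p]) ≤ DD τ (J ++ [ι p]) := DD_mono hστ _ hmemrange
  -- compute DD τ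
  have hcomp : DD τ (J ++ [ι p]) = 2 * graphWeight G w := by
    rw [hτ, DD_map_sum htype.1.isConnected.preconnected w (J ++ [ι p]), hJsum, two_nsmul,
      Multiset.map_add, Multiset.sum_add, graphWeight_eq, two_mul]
  have hsym : ρ q p = ρ p q := hρ.1 q p
  rw [hsym] at hlow
  have := hlow.trans (hup.trans_eq hcomp)
  linarith

end Key


section PartOne

lemma part1 {M : Type} [Fintype M] (ρ : M → M → ℝ) (hMne : Nonempty M)
    {V : Type} [Fintype V] (G : SimpleGraph V) (ι : M ↪ V) (w : Sym2 V → ℝ)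
    (hfill : IsGenFillingE G ι w ρ)
    (π : ZMod (Fintype.card M) ≃ M)
    (pk : (k : ZMod (Fintype.card M)) → G.Walk (ι (π k)) (ι (π (k + 1))))
    (hpath : ∀ k, (pk k).IsPath)
    (hcover : ∀ e ∈ G.edgeSet, {k : ZMod (Fintype.card M) | e ∈ (pk k).edges}.ncard = 2) :
    (1 / 2) * ∑ᶠ k : ZMod (Fintype.card M), ρ (π k) (π (k + 1)) ≤ graphWeight G w := by
  classical
  haveI : NeZero (Fintype.card M) := ⟨Fintype.card_ne_zero⟩
  rw [finsum_eq_sum_of_fintype]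
  have hterm : ∀ k, ρ (π k) (π (k + 1)) ≤ walkWeight w (pk k) :=
    fun k => hfill.2 _ _ _ (hpath k)
  have h1 : ∑ k, ρ (π k) (π (k + 1)) ≤ ∑ k, walkWeight w (pk k) :=
    Finset.sum_le_sum (fun k _ => hterm k)
  have h2 : ∑ k, walkWeight w (pk k) = 2 * graphWeight G w := by
    have hstep : ∀ k, walkWeight w (pk k)
        = ∑ e ∈ eFin G, if e ∈ (pk k).edges then w e else 0 := by
      intro k
      have hnodup : (pk k).edges.Nodup := (hpath k).isTrail.edges_nodup
      have hfilter : (eFin G).filter (fun e => e ∈ (pk k).edges) = (pk k).edges.toFinset := by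
        ext e
        rw [Finset.mem_filter, List.mem_toFinset, mem_eFin]
        constructor
        · exact fun h => h.2
        · intro h
          exact ⟨SimpleGraph.Walk.edges_subset_edgeSet _ h, h⟩
      rw [walkWeight, ← List.sum_toFinset _ hnodup, ← hfilter, Finset.sum_filter]
    rw [Finset.sum_congr rfl (fun k _ => hstep k), Finset.sum_comm]
    have hinner : ∀ e ∈ eFin G,
        (∑ k : ZMod (Fintype.card M), if e ∈ (pk k).edges then w e else 0) = 2 * w e := by
      intro e he
      rw [Finset.sum_ite, Finset.sum_const, Finset.sum_const_zero, add_zero]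
      have hcard : (Finset.univ.filter (fun k : ZMod (Fintype.card M) =>
          e ∈ (pk k).edges)).card = 2 := by
        have := hcover e (mem_eFin.mp he)
        rwa [Set.ncard_eq_toFinset_card', Set.toFinset_setOf] at this
      rw [hcard]
      rw [nsmul_eq_mul]
      norm_num
    rw [Finset.sum_congr rfl hinner, ← Finset.mul_sum, graphWeight_eq]
    rfl
  linarith

end PartOne


section Star

def starG (M : Type) (p₀ : M) : SimpleGraph M where
  Adj a b := a ≠ b ∧ (a = p₀ ∨ b = p₀)
  symm := ⟨fun a b h => ⟨h.1.symm, h.2.symm⟩⟩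
  loopless := ⟨fun a h => h.1 rfl⟩

lemma starG_connected (M : Type) (p₀ : M) : (starG M p₀).Connected := by
  haveI : Nonempty M := ⟨p₀⟩
  apply SimpleGraph.Connected.mk
  have hreach : ∀ a, (starG M p₀).Reachable a p₀ := by
    intro a
    by_cases h : a = p₀
    · rw [h]
    · exact ⟨SimpleGraph.Walk.cons ⟨h, Or.inr rfl⟩ SimpleGraph.Walk.nil⟩
  intro a b
  exact (hreach a).trans (hreach b).symm

lemma starG_isTree (M : Type) (p₀ : M) : (starG M p₀).IsTree := by
  constructor
  · exact starG_connected M p₀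
  · intro v c hc
    cases c with
    | nil => exact SimpleGraph.Walk.IsCycle.not_of_nil hc
    | @cons _ x₁ _ h1 c1 =>
      rw [SimpleGraph.Walk.cons_isCycle_iff] at hc
      obtain ⟨hc1path, hedge⟩ := hc
      cases c1 with
      | nil => exact h1.1 rfl
      | @cons _ x₂ _ h2 c2 =>
        cases c2 with
        | nil =>
          apply hedge
          rw [SimpleGraph.Walk.edges_cons, SimpleGraph.Walk.edges_nil]
          simp [Sym2.eq_swap]
        | @cons _ x₃ _ h3 c3 =>
          have hsup := hc1path.support_nodup
          rw [SimpleGraph.Walk.support_cons, SimpleGraph.Walk.support_cons] at hsup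
          obtain ⟨hx₁, hsup2⟩ := List.nodup_cons.mp hsup
          obtain ⟨hx₂, _⟩ := List.nodup_cons.mp hsup2
          have hx₁x₂ : x₁ ≠ x₂ := fun h => hx₁ (h ▸ List.mem_cons_self)
          have hx₁c3 : x₁ ∉ c3.support := fun h => hx₁ (List.mem_cons_of_mem _ h)
          have hvc3 : v ∈ c3.support := SimpleGraph.Walk.end_mem_support c3
          by_cases hx1p : x₁ = p₀
          · rcases h3.2 with h | h
            · exact hx₁x₂ (hx1p.trans h.symm)
            · apply hx₁c3
              have hx13 : x₁ = x₃ := hx1p.trans h.symm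
              rw [hx13]
              exact SimpleGraph.Walk.start_mem_support c3
          · have hx2p : x₂ = p₀ := h2.2.resolve_left hx1p
            have hvp : v = p₀ := h1.2.resolve_right hx1p
            apply hx₂
            have hx2v : x₂ = v := hx2p.trans hvp.symm
            rw [hx2v]
            exact hvc3

lemma star_filling {M : Type} [Fintype M] (ρ : M → M → ℝ) (hρ : IsPseudometric ρ) (p₀ : M) :
    IsGenFillingE (starG M p₀) (Function.Embedding.refl M)
      (fun _ => ∑ a : M, ∑ b : M, |ρ a b|) ρ := by
  constructor
  · exact starG_connected M p₀
  · intro a b γ hγ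
    set C := ∑ a : M, ∑ b : M, |ρ a b| with hC
    have hC0 : 0 ≤ C :=
      Finset.sum_nonneg (fun _ _ => Finset.sum_nonneg (fun _ _ => abs_nonneg _))
    have hCub : ∀ x y : M, ρ x y ≤ C := by
      intro x y
      calc ρ x y ≤ |ρ x y| := le_abs_self _
      _ ≤ ∑ b, |ρ x b| :=
          Finset.single_le_sum (f := fun b => |ρ x b|) (fun _ _ => abs_nonneg _)
            (Finset.mem_univ y)
      _ ≤ C :=
          Finset.single_le_sum (f := fun a => ∑ b, |ρ a b|)
            (fun _ _ => Finset.sum_nonneg fun _ _ => abs_nonneg _) (Finset.mem_univ x)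
    by_cases hab : a = b
    · subst hab
      have hnil : γ = SimpleGraph.Walk.nil := SimpleGraph.Walk.isPath_iff_eq_nil.mp hγ
      rw [hnil, hρ.2.2.1 a]
      simp [walkWeight]
    · have hlen : 1 ≤ γ.length := by
        by_contra h
        push_neg at h
        have h0 : γ.length = 0 := by omega
        exact hab (SimpleGraph.Walk.eq_of_length_eq_zero h0)
      have hval : walkWeight (fun _ => C) γ = γ.length * C := by
        rw [walkWeight, List.map_const', List.sum_replicate, SimpleGraph.Walk.length_edges,
          nsmul_eq_mul]
      calc ρ a b ≤ C := hCub a b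
      _ = 1 * C := (one_mul C).symm
      _ ≤ γ.length * C := by
          apply mul_le_mul_of_nonneg_right _ hC0
          exact_mod_cast hlen
      _ = walkWeight (fun _ => C) γ := hval.symm

end Star


/-- A generalized filling of a finite pseudometric space with
`ρ` not identically zero, whose type is a tree in which every vertex of
degree 1 is boundary, satisfies
`w(𝒢) ≥ (1/2) Σ ρ(π(k), π(k+1))` for every planar cyclic order `π`;
in particular `w(𝒢) > 0`, and hence `mf₋(M) > 0`. -/
theorem genFilling_weight_pos (M : Type) [Fintype M] (ρ : M → M → ℝ)
    (hρ : IsPseudometric ρ) (hne : ∃ p q : M, ρ p q ≠ 0)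
    {V : Type} [Fintype V] (G : SimpleGraph V) (ι : M ↪ V) (w : Sym2 V → ℝ)
    (hfill : IsGenFillingE G ι w ρ) (htype : GoodType G ι) :
    (∀ (π : ZMod (Fintype.card M) ≃ M)
        (p : (k : ZMod (Fintype.card M)) → G.Walk (ι (π k)) (ι (π (k + 1)))),
        (∀ k, (p k).IsPath) →
        (∀ e ∈ G.edgeSet, {k : ZMod (Fintype.card M) | e ∈ (p k).edges}.ncard = 2) →
        (1 / 2) * ∑ᶠ k : ZMod (Fintype.card M), ρ (π k) (π (k + 1)) ≤ graphWeight G w) ∧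
      0 < graphWeight G w ∧ 0 < mfNeg M ρ := by
  obtain ⟨p₀, q₀, hne0⟩ := hne
  have hρ00 : 0 < ρ p₀ q₀ := lt_of_le_of_ne (hρ.2.1 p₀ q₀) (Ne.symm hne0)
  have hp₀q₀ : p₀ ≠ q₀ := by
    rintro rfl
    rw [hρ.2.2.1] at hne0
    exact hne0 rfl
  refine ⟨?_, ?_, ?_⟩
  · intro π pk hpath hcover
    exact part1 ρ ⟨p₀⟩ G ι w hfill π pk hpath hcover
  · calc (0 : ℝ) < ρ p₀ q₀ := hρ00
    _ ≤ graphWeight G w := key_ineq hρ G ι w hfill htype hp₀q₀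
  · have hLB : ∀ x ∈ {r : ℝ | ∃ (V : Type) (_ : Fintype V) (G : SimpleGraph V) (ι : M ↪ V)
        (w : Sym2 V → ℝ),
          IsGenFillingE G ι w ρ ∧ GoodType G ι ∧ r = graphWeight G w}, ρ p₀ q₀ ≤ x := by
      rintro x ⟨V', instV', G', ι', w', hfill', htype', rfl⟩
      exact key_ineq hρ G' ι' w' hfill' htype' hp₀q₀
    have hSne : ({r : ℝ | ∃ (V : Type) (_ : Fintype V) (G : SimpleGraph V) (ι : M ↪ V)
        (w : Sym2 V → ℝ),
          IsGenFillingE G ι w ρ ∧ GoodType G ι ∧ r = graphWeight G w}).Nonempty := by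
      refine ⟨graphWeight (starG M p₀) (fun _ => ∑ a : M, ∑ b : M, |ρ a b|),
        M, ‹Fintype M›, starG M p₀, Function.Embedding.refl M,
        (fun _ => ∑ a : M, ∑ b : M, |ρ a b|), star_filling ρ hρ p₀,
        ⟨starG_isTree M p₀, fun v _ => ⟨v, rfl⟩⟩, rfl⟩
    calc (0 : ℝ) < ρ p₀ q₀ := hρ00
    _ ≤ mfNeg M ρ := le_csInf hSne hLB

end MinFill
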